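/- arXiv:1308.2611 — 4 statements merged into one kernel-verified Lean document; each statement's English description precedes it below -/
import Mathlib

section
/- Let L > 0, ε > 0, γ > 0, and let U : ℝ × ℝ → ℝ be a C⁴ function, 2L-periodic in x, satisfying the regularized Boussinesq–Ostrovsky equation U_tt − U_xx = ε( (1/2)(U²)_xx + U_ttxx − γU ) at every point. Define the mean value m(t) = (1/(2L)) ∫_{−L}^{L} U(x,t) dx, and set F₀ = m(0), V₀ = m′(0). Then for every t ∈ ℝ, m(t) = F₀ cos(√(εγ) t) + V₀ sin(√(εγ) t)/√(εγ). -/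
open MeasureTheory intervalIntegral


noncomputable def ptd (f : ℝ × ℝ → ℝ) : ℝ × ℝ → ℝ := fun p => fderiv ℝ f p (0, 1)
noncomputable def pxd (f : ℝ × ℝ → ℝ) : ℝ × ℝ → ℝ := fun p => fderiv ℝ f p (1, 0)

lemma contDiff_ptd {f : ℝ × ℝ → ℝ} {n : ℕ} (hf : ContDiff ℝ (n + 1 : ℕ) f) :
    ContDiff ℝ (n : ℕ) (ptd f) := by
  have h := hf.fderiv_right (m := (n : ℕ∞)) (by exact_mod_cast le_refl _)
  exact h.clm_apply contDiff_const

lemma contDiff_pxd {f : ℝ × ℝ → ℝ} {n : ℕ} (hf : ContDiff ℝ (n + 1 : ℕ) f) :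
    ContDiff ℝ (n : ℕ) (pxd f) := by
  have h := hf.fderiv_right (m := (n : ℕ∞)) (by exact_mod_cast le_refl _)
  exact h.clm_apply contDiff_const

lemma hasDerivAt_t {f : ℝ × ℝ → ℝ} (hf : Differentiable ℝ f) (x t : ℝ) :
    HasDerivAt (fun s => f (x, s)) (ptd f (x, t)) t := by
  have h1 : HasDerivAt (fun s : ℝ => ((x, s) : ℝ × ℝ)) ((0 : ℝ), (1 : ℝ)) t :=
    (hasDerivAt_const t x).prodMk (hasDerivAt_id t)
  exact (hf.differentiableAt.hasFDerivAt.comp_hasDerivAt t h1)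

lemma hasDerivAt_x {f : ℝ × ℝ → ℝ} (hf : Differentiable ℝ f) (x t : ℝ) :
    HasDerivAt (fun y => f (y, t)) (pxd f (x, t)) x := by
  have h1 : HasDerivAt (fun y : ℝ => ((y, t) : ℝ × ℝ)) ((1 : ℝ), (0 : ℝ)) x :=
    (hasDerivAt_id x).prodMk (hasDerivAt_const x t)
  exact (hf.differentiableAt.hasFDerivAt.comp_hasDerivAt x h1)

lemma iteratedDeriv_two_t {f : ℝ × ℝ → ℝ} (hf : ContDiff ℝ 2 f) (x t : ℝ) :
    iteratedDeriv 2 (fun s => f (x, s)) t = ptd (ptd f) (x, t) := by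
  have hd1 : Differentiable ℝ f := hf.differentiable (by norm_num)
  have hpt : ContDiff ℝ (1 : ℕ) (ptd f) := contDiff_ptd (n := 1) (by exact_mod_cast hf)
  have hd2 : Differentiable ℝ (ptd f) := hpt.differentiable (by norm_num)
  have e1 : deriv (fun s => f (x, s)) = fun s => ptd f (x, s) :=
    funext fun s => (hasDerivAt_t hd1 x s |>.deriv)
  rw [show (2:ℕ) = 1 + 1 from rfl, iteratedDeriv_succ, iteratedDeriv_one, e1]
  exact (hasDerivAt_t hd2 x t).deriv

lemma iteratedDeriv_two_x {f : ℝ × ℝ → ℝ} (hf : ContDiff ℝ 2 f) (x t : ℝ) :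
    iteratedDeriv 2 (fun y => f (y, t)) x = pxd (pxd f) (x, t) := by
  have hd1 : Differentiable ℝ f := hf.differentiable (by norm_num)
  have hpx : ContDiff ℝ (1 : ℕ) (pxd f) := contDiff_pxd (n := 1) (by exact_mod_cast hf)
  have hd2 : Differentiable ℝ (pxd f) := hpx.differentiable (by norm_num)
  have e1 : deriv (fun y => f (y, t)) = fun y => pxd f (y, t) :=
    funext fun y => (hasDerivAt_x hd1 y t |>.deriv)
  rw [show (2:ℕ) = 1 + 1 from rfl, iteratedDeriv_succ, iteratedDeriv_one, e1]
  exact (hasDerivAt_x hd2 x t).deriv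

lemma pxd_periodic {f : ℝ × ℝ → ℝ} {L : ℝ} (hf : Differentiable ℝ f)
    (hper : ∀ x t : ℝ, f (x + 2 * L, t) = f (x, t)) (x t : ℝ) :
    pxd f (x + 2 * L, t) = pxd f (x, t) := by
  have h1 : HasDerivAt (fun y => f (y, t)) (pxd f (x + 2 * L, t)) (x + 2 * L) :=
    hasDerivAt_x hf (x + 2 * L) t
  have hsh : HasDerivAt (fun y : ℝ => y + 2 * L) 1 x := (hasDerivAt_id x).add_const _
  have h2 : HasDerivAt (fun y => f (y + 2 * L, t)) (pxd f (x + 2 * L, t) * 1) x :=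
    by have := HasDerivAt.comp x h1 hsh; exact this
  have h3 : HasDerivAt (fun y => f (y, t)) (pxd f (x + 2 * L, t) * 1) x := by
    have : (fun y => f (y + 2 * L, t)) = fun y => f (y, t) := funext fun y => hper y t
    rwa [this] at h2
  have h4 := hasDerivAt_x hf x t
  have := h3.unique h4
  linarith [this]

lemma integral_pxd_pxd_eq_zero {f : ℝ × ℝ → ℝ} {L : ℝ} (hf : ContDiff ℝ 2 f)
    (hper : ∀ x t : ℝ, f (x + 2 * L, t) = f (x, t)) (t : ℝ) :
    ∫ x in (-L)..L, pxd (pxd f) (x, t) = 0 := by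
  have hpx1 : ContDiff ℝ (1 : ℕ) (pxd f) := contDiff_pxd (n := 1) (by exact_mod_cast hf)
  have hd2 : Differentiable ℝ (pxd f) := hpx1.differentiable (by norm_num)
  have hcont : Continuous (pxd (pxd f)) :=
    (contDiff_pxd (n := 0) (by exact_mod_cast hpx1)).continuous
  have hderiv : ∀ x ∈ Set.uIcc (-L) L,
      HasDerivAt (fun y => pxd f (y, t)) (pxd (pxd f) (x, t)) x :=
    fun x _ => hasDerivAt_x hd2 x t
  have hint : IntervalIntegrable (fun x => pxd (pxd f) (x, t)) volume (-L) L :=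
    (hcont.comp (continuous_id.prodMk continuous_const)).intervalIntegrable _ _
  rw [intervalIntegral.integral_eq_sub_of_hasDerivAt hderiv hint]
  have hperx : pxd f (-L + 2 * L, t) = pxd f (-L, t) :=
    pxd_periodic (hf.differentiable (by norm_num)) hper (-L) t
  have : (-L : ℝ) + 2 * L = L := by ring
  rw [this] at hperx
  rw [hperx]; ring

lemma hasDerivAt_param_integral {G : ℝ × ℝ → ℝ} {L : ℝ} (hG : ContDiff ℝ 1 G) (t₀ : ℝ) :
    HasDerivAt (fun t => ∫ x in (-L)..L, G (x, t)) (∫ x in (-L)..L, ptd G (x, t₀)) t₀ := by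
  have hGc : Continuous G := hG.continuous
  have hptc : Continuous (ptd G) := (contDiff_ptd (n := 0) (by exact_mod_cast hG)).continuous
  have hK : IsCompact ((Set.uIcc (-L) L) ×ˢ (Set.Icc (t₀ - 1) (t₀ + 1))) :=
    isCompact_uIcc.prod isCompact_Icc
  obtain ⟨C, hC⟩ := hK.exists_bound_of_continuousOn hptc.continuousOn
  have h := intervalIntegral.hasDerivAt_integral_of_dominated_loc_of_deriv_le
    (F := fun t x => G (x, t)) (F' := fun t x => ptd G (x, t)) (x₀ := t₀)
    (a := -L) (b := L) (μ := volume) (bound := fun _ => C) (s := Metric.ball t₀ 1) (Metric.ball_mem_nhds t₀ one_pos)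
    (Filter.Eventually.of_forall fun t =>
      ((hGc.comp (continuous_id.prodMk continuous_const)).aestronglyMeasurable))
    ((hGc.comp (continuous_id.prodMk continuous_const)).intervalIntegrable _ _)
    ((hptc.comp (continuous_id.prodMk continuous_const)).aestronglyMeasurable)
    (Filter.Eventually.of_forall fun x hx u hu => by
      apply hC
      constructor
      · exact Set.uIoc_subset_uIcc hx
      · rw [Metric.mem_ball, Real.dist_eq] at hu
        constructor <;> [linarith [abs_lt.mp hu |>.1]; linarith [abs_lt.mp hu |>.2]])
    intervalIntegrable_const
    (Filter.Eventually.of_forall fun x _ u _ =>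
      hasDerivAt_t (hG.differentiable one_ne_zero) x u)
  exact h.2

lemma ode_unique (k : ℝ) (hk : 0 < k) (m m1 : ℝ → ℝ)
    (h1 : ∀ t, HasDerivAt m (m1 t) t)
    (h2 : ∀ t, HasDerivAt m1 (-(k ^ 2) * m t) t) (t : ℝ) :
    m t = m 0 * Real.cos (k * t) + m1 0 * Real.sin (k * t) / k := by
  set g : ℝ → ℝ := fun t => m 0 * Real.cos (k * t) + m1 0 * Real.sin (k * t) / k with hg
  set g1 : ℝ → ℝ := fun t => -(m 0) * k * Real.sin (k * t) + m1 0 * Real.cos (k * t) with hg1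
  have hkt : ∀ s : ℝ, HasDerivAt (fun u : ℝ => k * u) k s := fun s => by
    simpa using (hasDerivAt_id s).const_mul k
  have hdg : ∀ s, HasDerivAt g (g1 s) s := by
    intro s
    have hc : HasDerivAt (fun u => Real.cos (k * u)) (-Real.sin (k * s) * k) s :=
      (Real.hasDerivAt_cos (k * s)).comp s (hkt s)
    have hs : HasDerivAt (fun u => Real.sin (k * u)) (Real.cos (k * s) * k) s :=
      (Real.hasDerivAt_sin (k * s)).comp s (hkt s)
    have := ((hc.const_mul (m 0)).add ((hs.const_mul (m1 0)).div_const k))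
    refine this.congr_deriv ?_
    field_simp [hg1]
    ring
  have hdg1 : ∀ s, HasDerivAt g1 (-(k ^ 2) * g s) s := by
    intro s
    have hc : HasDerivAt (fun u => Real.cos (k * u)) (-Real.sin (k * s) * k) s :=
      (Real.hasDerivAt_cos (k * s)).comp s (hkt s)
    have hs : HasDerivAt (fun u => Real.sin (k * u)) (Real.cos (k * s) * k) s :=
      (Real.hasDerivAt_sin (k * s)).comp s (hkt s)
    have := ((hs.const_mul (-(m 0) * k)).add (hc.const_mul (m1 0)))
    refine this.congr_deriv ?_
    simp only [hg]; field_simp [hk.ne']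
    ring
  set E : ℝ → ℝ := fun s => (m s - g s) ^ 2 * k ^ 2 + (m1 s - g1 s) ^ 2 with hE
  have hdE : ∀ s, HasDerivAt E ((2 * (m s - g s) ^ 1 * (m1 s - g1 s)) * k ^ 2
      + 2 * (m1 s - g1 s) ^ 1 * (-(k ^ 2) * m s - -(k ^ 2) * g s)) s := fun s =>
    ((((h1 s).sub (hdg s)).pow 2).mul_const _).add (((h2 s).sub (hdg1 s)).pow 2)
  have hdE0 : ∀ s, HasDerivAt E 0 s := fun s => by
    have := hdE s
    convert this using 1
    ring
  have hEconst : ∀ s, E s = E 0 := fun s =>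
    is_const_of_deriv_eq_zero (fun u => (hdE0 u).differentiableAt)
      (fun u => (hdE0 u).deriv) s 0
  have hE0 : E 0 = 0 := by
    have hg0 : g 0 = m 0 := by simp [hg]
    have hg10 : g1 0 = m1 0 := by simp [hg1]
    simp [hE, hg0, hg10]
  have hEt : E t = 0 := by rw [hEconst t, hE0]
  have hEt' : (m t - g t) ^ 2 * k ^ 2 + (m1 t - g1 t) ^ 2 = 0 := hEt
  have h1' : (m t - g t) ^ 2 * k ^ 2 = 0 := by
    nlinarith [mul_nonneg (sq_nonneg (m t - g t)) (sq_nonneg k), sq_nonneg (m1 t - g1 t)]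
  have : (m t - g t) ^ 2 = 0 := by
    have hk2 : (0:ℝ) < k ^ 2 := by positivity
    exact (mul_eq_zero.mp h1').resolve_right (by positivity)
  have := pow_eq_zero_iff (n := 2) (by norm_num) |>.mp this
  have : m t = g t := by linarith
  rw [this]

/-- For a C⁴, 2L-periodic (in x) solution U of the regularized
Boussinesq–Ostrovsky equation with γ > 0, the mean value
  m(t) = (1/(2L)) ∫_{−L}^{L} U(x,t) dx
satisfies m(t) = F₀ cos(√(εγ) t) + V₀ sin(√(εγ) t)/√(εγ), where
F₀ = m(0) and V₀ = m′(0). -/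
theorem mean_value_oscillation
    (L ε γ : ℝ) (hL : 0 < L) (hε : 0 < ε) (hγ : 0 < γ)
    (U : ℝ × ℝ → ℝ)
    (hU : ContDiff ℝ 4 U)
    (hper : ∀ x t : ℝ, U (x + 2 * L, t) = U (x, t))
    (hPDE : ∀ x t : ℝ,
      iteratedDeriv 2 (fun s => U (x, s)) t
        - iteratedDeriv 2 (fun y => U (y, t)) x
      = ε * ((1 / 2) * iteratedDeriv 2 (fun y => (U (y, t)) ^ 2) x
          + iteratedDeriv 2 (fun s => iteratedDeriv 2 (fun y => U (y, s)) x) t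
          - γ * U (x, t)))
    (m : ℝ → ℝ)
    (hm : m = fun t => (1 / (2 * L)) * ∫ x in (-L)..L, U (x, t))
    (F₀ V₀ : ℝ) (hF₀ : F₀ = m 0) (hV₀ : V₀ = deriv m 0) :
    ∀ t : ℝ,
      m t = F₀ * Real.cos (Real.sqrt (ε * γ) * t)
          + V₀ * Real.sin (Real.sqrt (ε * γ) * t) / Real.sqrt (ε * γ) := by
  intro t
  set k : ℝ := Real.sqrt (ε * γ) with hkdef
  have hkpos : 0 < k := Real.sqrt_pos.mpr (mul_pos hε hγ)
  have hk2 : k ^ 2 = ε * γ := Real.sq_sqrt (mul_pos hε hγ).le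
  -- regularity facts
  have hU4 : ContDiff ℝ ((3 : ℕ) + 1 : ℕ) U := by exact_mod_cast hU
  have hU2 : ContDiff ℝ 2 U := hU.of_le (by norm_num)
  have hU1 : ContDiff ℝ 1 U := hU.of_le (by norm_num)
  have hUt3 : ContDiff ℝ (3 : ℕ) (ptd U) := contDiff_ptd hU4
  have hUt1 : ContDiff ℝ 1 (ptd U) := hUt3.of_le (by norm_num)
  have hUx3 : ContDiff ℝ (3 : ℕ) (pxd U) := contDiff_pxd hU4
  have hpxpxU2 : ContDiff ℝ (2 : ℕ) (pxd (pxd U)) :=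
    contDiff_pxd (n := 2) (by exact_mod_cast hUx3)
  have hpxpxU2' : ContDiff ℝ 2 (pxd (pxd U)) := by exact_mod_cast hpxpxU2
  have hW : ContDiff ℝ 2 (fun p : ℝ × ℝ => U p ^ 2) := by
    have := hU2.mul hU2
    simpa [pow_two] using this
  have hWper : ∀ x t : ℝ, (fun p : ℝ × ℝ => U p ^ 2) (x + 2 * L, t)
      = (fun p : ℝ × ℝ => U p ^ 2) (x, t) := by
    intro x t; simp [hper x t]
  -- zero integrals
  have hZ1 : ∀ s, ∫ x in (-L)..L, pxd (pxd U) (x, s) = 0 := fun s =>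
    integral_pxd_pxd_eq_zero hU2 hper s
  have hZ2 : ∀ s, ∫ x in (-L)..L, pxd (pxd (fun p : ℝ × ℝ => U p ^ 2)) (x, s) = 0 := fun s =>
    integral_pxd_pxd_eq_zero hW hWper s
  have hJ1 : ∀ s, ∫ x in (-L)..L, ptd (pxd (pxd U)) (x, s) = 0 := by
    intro s
    have hA := hasDerivAt_param_integral (L := L) (hpxpxU2'.of_le (by norm_num)) s
    have hconst : (fun u => ∫ x in (-L)..L, pxd (pxd U) (x, u)) = fun _ => (0 : ℝ) :=
      funext hZ1
    rw [hconst] at hA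
    exact hA.unique (hasDerivAt_const s 0)
  have hptpxpxU1 : ContDiff ℝ 1 (ptd (pxd (pxd U))) := by
    exact_mod_cast contDiff_ptd (n := 1) (by exact_mod_cast hpxpxU2)
  have hZ3 : ∀ s, ∫ x in (-L)..L, ptd (ptd (pxd (pxd U))) (x, s) = 0 := by
    intro s
    have hA := hasDerivAt_param_integral (L := L) hptpxpxU1 s
    have hconst : (fun u => ∫ x in (-L)..L, ptd (pxd (pxd U)) (x, u)) = fun _ => (0 : ℝ) :=
      funext hJ1
    rw [hconst] at hA
    exact hA.unique (hasDerivAt_const s 0)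
  -- first and second derivative of m
  set m1 : ℝ → ℝ := fun s => (1 / (2 * L)) * ∫ x in (-L)..L, ptd U (x, s) with hm1
  have h1 : ∀ s, HasDerivAt m (m1 s) s := by
    intro s
    rw [hm]
    exact (hasDerivAt_param_integral hU1 s).const_mul (1 / (2 * L))
  have h2 : ∀ s, HasDerivAt m1 (-(k ^ 2) * m s) s := by
    intro s
    have hA := (hasDerivAt_param_integral (L := L) hUt1 s).const_mul (1 / (2 * L))
    have hpt : ∀ x, ptd (ptd U) (x, s)
        = pxd (pxd U) (x, s) + ε * ((1 / 2) * pxd (pxd (fun p : ℝ × ℝ => U p ^ 2)) (x, s)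
            + ptd (ptd (pxd (pxd U))) (x, s) - γ * U (x, s)) := by
      intro x
      have h := hPDE x s
      have hinner : (fun u => iteratedDeriv 2 (fun y => U (y, u)) x)
          = fun u => pxd (pxd U) (x, u) := funext fun u => iteratedDeriv_two_x hU2 x u
      rw [iteratedDeriv_two_t hU2 x s, iteratedDeriv_two_x hU2 x s,
        iteratedDeriv_two_x hW x s, hinner, iteratedDeriv_two_t hpxpxU2' x s] at h
      linarith
    -- continuity / integrability of each piece
    have c1 : IntervalIntegrable (fun x => pxd (pxd U) (x, s)) volume (-L) L :=
      ((hpxpxU2'.continuous).comp (continuous_id.prodMk continuous_const)).intervalIntegrable _ _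
    have hW2 : ContDiff ℝ ((1 : ℕ) + 1 : ℕ) (fun p : ℝ × ℝ => U p ^ 2) := by
      exact_mod_cast hW
    have hWx1 : ContDiff ℝ ((0 : ℕ) + 1 : ℕ) (pxd (fun p : ℝ × ℝ => U p ^ 2)) := by
      exact_mod_cast contDiff_pxd hW2
    have hWxx0 : Continuous (pxd (pxd (fun p : ℝ × ℝ => U p ^ 2))) :=
      (contDiff_pxd hWx1).continuous
    have c2 : IntervalIntegrable (fun x => pxd (pxd (fun p : ℝ × ℝ => U p ^ 2)) (x, s))
        volume (-L) L :=
      (hWxx0.comp (continuous_id.prodMk continuous_const)).intervalIntegrable _ _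
    have hpt1 : ContDiff ℝ ((0 : ℕ) + 1 : ℕ) (ptd (pxd (pxd U))) := by
      exact_mod_cast hptpxpxU1
    have hpt0 : Continuous (ptd (ptd (pxd (pxd U)))) := (contDiff_ptd hpt1).continuous
    have c3 : IntervalIntegrable (fun x => ptd (ptd (pxd (pxd U))) (x, s)) volume (-L) L :=
      (hpt0.comp (continuous_id.prodMk continuous_const)).intervalIntegrable _ _
    have c4 : IntervalIntegrable (fun x => U (x, s)) volume (-L) L :=
      ((hU.continuous).comp (continuous_id.prodMk continuous_const)).intervalIntegrable _ _
    have hint : ∫ x in (-L)..L, ptd (ptd U) (x, s)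
        = -(ε * γ) * ∫ x in (-L)..L, U (x, s) := by
      rw [intervalIntegral.integral_congr (g := fun x =>
        pxd (pxd U) (x, s) + ε * ((1 / 2) * pxd (pxd (fun p : ℝ × ℝ => U p ^ 2)) (x, s)
          + ptd (ptd (pxd (pxd U))) (x, s) - γ * U (x, s))) (fun x _ => hpt x)]
      have cB : IntervalIntegrable (fun x =>
          (1 / 2) * pxd (pxd (fun p : ℝ × ℝ => U p ^ 2)) (x, s)
            + ptd (ptd (pxd (pxd U))) (x, s) - γ * U (x, s)) volume (-L) L :=
        ((c2.const_mul _).add c3).sub (c4.const_mul _)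
      rw [intervalIntegral.integral_add c1 (cB.const_mul ε),
        intervalIntegral.integral_const_mul,
        intervalIntegral.integral_sub ((c2.const_mul _).add c3) (c4.const_mul _),
        intervalIntegral.integral_add (c2.const_mul _) c3,
        intervalIntegral.integral_const_mul, intervalIntegral.integral_const_mul,
        hZ1 s, hZ2 s, hZ3 s]
      ring
    have heq : (1 / (2 * L)) * ∫ x in (-L)..L, ptd (ptd U) (x, s) = -(k ^ 2) * m s := by
      rw [hint, hk2, hm]
      ring
    rwa [heq] at hA
  have hmain := ode_unique k hkpos m m1 h1 h2 t
  have hm10 : m1 0 = deriv m 0 := ((h1 0).deriv).symm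
  rw [hmain, hF₀, hV₀, hm10]
end

section
/- Let L > 0, ε > 0, γ ≥ 0, and let U : ℝ × ℝ → ℝ be a C⁴ function, 2L-periodic in x, satisfying the regularized Boussinesq–Ostrovsky equation U_tt − U_xx = ε( (1/2)(U²)_xx + U_ttxx − γU ) at every point. Define the energy E(t) = ∫_{−L}^{L} ( U_t² + U_x² + εγ U² + ε U_tx² + ε U U_x² ) dx. Then for every t, E′(t) = ε ∫_{−L}^{L} U_t U_x² dx. -/
open MeasureTheory intervalIntegral

noncomputable def pd1 (f : ℝ × ℝ → ℝ) : ℝ × ℝ → ℝ := fun p => fderiv ℝ f p (1, 0)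
noncomputable def pd2 (f : ℝ × ℝ → ℝ) : ℝ × ℝ → ℝ := fun p => fderiv ℝ f p (0, 1)

lemma contDiff_pd1 {f : ℝ × ℝ → ℝ} {n : ℕ} (hf : ContDiff ℝ (n + 1) f) :
    ContDiff ℝ n (pd1 f) := by
  have h := hf.fderiv_right (m := n) (by norm_cast)
  exact (ContinuousLinearMap.apply ℝ ℝ ((1 : ℝ), (0 : ℝ))).contDiff.comp h

lemma contDiff_pd2 {f : ℝ × ℝ → ℝ} {n : ℕ} (hf : ContDiff ℝ (n + 1) f) :
    ContDiff ℝ n (pd2 f) := by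
  have h := hf.fderiv_right (m := n) (by norm_cast)
  exact (ContinuousLinearMap.apply ℝ ℝ ((0 : ℝ), (1 : ℝ))).contDiff.comp h

lemma hasDerivAt_slice1 {f : ℝ × ℝ → ℝ} {x t : ℝ} (hf : DifferentiableAt ℝ f (x, t)) :
    HasDerivAt (fun y => f (y, t)) (pd1 f (x, t)) x := by
  have h := hf.hasFDerivAt.comp_hasDerivAt x (HasDerivAt.prodMk (hasDerivAt_id x) (hasDerivAt_const x t))
  simpa [pd1, Function.comp_def] using h

lemma hasDerivAt_slice2 {f : ℝ × ℝ → ℝ} {x t : ℝ} (hf : DifferentiableAt ℝ f (x, t)) :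
    HasDerivAt (fun s => f (x, s)) (pd2 f (x, t)) t := by
  have h := hf.hasFDerivAt.comp_hasDerivAt t (HasDerivAt.prodMk (hasDerivAt_const t x) (hasDerivAt_id t))
  simpa [pd2, Function.comp_def] using h

lemma pd_comm {f : ℝ × ℝ → ℝ} (hf : ContDiff ℝ 2 f) : pd1 (pd2 f) = pd2 (pd1 f) := by
  funext p
  have hsymm : IsSymmSndFDerivAt ℝ f p :=
    (hf.contDiffAt).isSymmSndFDerivAt (by norm_num)
  have hdiff : DifferentiableAt ℝ (fderiv ℝ f) p :=
    ((hf.fderiv_right (m := 1) (by norm_cast)).differentiable (by norm_num)).differentiableAt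
  have e1 : pd1 (pd2 f) p = fderiv ℝ (fderiv ℝ f) p (1, 0) (0, 1) := by
    show fderiv ℝ (fun q => fderiv ℝ f q (0, 1)) p (1, 0) = _
    rw [fderiv_clm_apply hdiff (differentiableAt_const _)]
    simp
  have e2 : pd2 (pd1 f) p = fderiv ℝ (fderiv ℝ f) p (0, 1) (1, 0) := by
    show fderiv ℝ (fun q => fderiv ℝ f q (1, 0)) p (0, 1) = _
    rw [fderiv_clm_apply hdiff (differentiableAt_const _)]
    simp
  rw [e1, e2, hsymm.eq]

lemma fderiv_shift {f : ℝ × ℝ → ℝ} {c : ℝ × ℝ} (hf : Differentiable ℝ f)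
    (hp : ∀ p, f (p + c) = f p) (p : ℝ × ℝ) : fderiv ℝ f (p + c) = fderiv ℝ f p := by
  have h1 : HasFDerivAt (fun q : ℝ × ℝ => f (q + c)) (fderiv ℝ f (p + c)) p := by
    have := (hf (p + c)).hasFDerivAt.comp p
      ((hasFDerivAt_id p).add_const c)
    simpa [Function.comp_def] using this
  have h2 : HasFDerivAt f (fderiv ℝ f (p + c)) p := by
    have : (fun q : ℝ × ℝ => f (q + c)) = f := funext hp
    rwa [this] at h1
  exact h2.fderiv.symm

lemma pd1_shift {f : ℝ × ℝ → ℝ} {c : ℝ × ℝ} (hf : Differentiable ℝ f)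
    (hp : ∀ p, f (p + c) = f p) (p : ℝ × ℝ) : pd1 f (p + c) = pd1 f p := by
  simp [pd1, fderiv_shift hf hp p]

lemma pd2_shift {f : ℝ × ℝ → ℝ} {c : ℝ × ℝ} (hf : Differentiable ℝ f)
    (hp : ∀ p, f (p + c) = f p) (p : ℝ × ℝ) : pd2 f (p + c) = pd2 f p := by
  simp [pd2, fderiv_shift hf hp p]
noncomputable def auxF (e g : ℝ) (U : ℝ × ℝ → ℝ) (p : ℝ × ℝ) : ℝ :=
  pd2 U p * pd2 U p + pd1 U p * pd1 U p + e * g * (U p * U p)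
    + e * (pd2 (pd1 U) p * pd2 (pd1 U) p) + e * U p * (pd1 U p * pd1 U p)

noncomputable def auxFt (e g : ℝ) (U : ℝ × ℝ → ℝ) (p : ℝ × ℝ) : ℝ :=
  2 * pd2 U p * pd2 (pd2 U) p + 2 * pd1 U p * pd2 (pd1 U) p
    + 2 * e * g * (U p * pd2 U p)
    + 2 * e * (pd2 (pd1 U) p * pd2 (pd2 (pd1 U)) p)
    + e * pd2 U p * (pd1 U p * pd1 U p)
    + 2 * e * (U p * pd1 U p * pd2 (pd1 U) p)

noncomputable def auxG (e : ℝ) (U : ℝ × ℝ → ℝ) (p : ℝ × ℝ) : ℝ :=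
  2 * pd2 U p * pd1 U p + e * (2 * U p * pd2 U p * pd1 U p)
    + e * (2 * pd2 U p * pd2 (pd2 (pd1 U)) p)

noncomputable def auxdG (e : ℝ) (U : ℝ × ℝ → ℝ) (p : ℝ × ℝ) : ℝ :=
  (2 * pd2 (pd1 U) p * pd1 U p + 2 * pd2 U p * pd1 (pd1 U) p)
    + e * (2 * pd1 U p * pd2 U p * pd1 U p + 2 * U p * pd2 (pd1 U) p * pd1 U p
        + 2 * U p * pd2 U p * pd1 (pd1 U) p)
    + e * (2 * pd2 (pd1 U) p * pd2 (pd2 (pd1 U)) p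
        + 2 * pd2 U p * pd2 (pd2 (pd1 (pd1 U))) p)

/-- For a C⁴, 2L-periodic (in x) solution U of the regularized
Boussinesq–Ostrovsky equation, the energy
  E(t) = ∫_{−L}^{L} ( U_t² + U_x² + εγU² + εU_tx² + εU U_x² ) dx
satisfies E′(t) = ε ∫_{−L}^{L} U_t U_x² dx. -/
theorem energy_balance
    (L ε γ : ℝ) (hL : 0 < L) (hε : 0 < ε) (hγ : 0 ≤ γ)
    (U : ℝ × ℝ → ℝ)
    (hU : ContDiff ℝ 4 U)
    (hper : ∀ x t : ℝ, U (x + 2 * L, t) = U (x, t))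
    (hPDE : ∀ x t : ℝ,
      iteratedDeriv 2 (fun s => U (x, s)) t
        - iteratedDeriv 2 (fun y => U (y, t)) x
      = ε * ((1 / 2) * iteratedDeriv 2 (fun y => (U (y, t)) ^ 2) x
          + iteratedDeriv 2 (fun s => iteratedDeriv 2 (fun y => U (y, s)) x) t
          - γ * U (x, t)))
    (E : ℝ → ℝ)
    (hE : E = fun t => ∫ x in (-L)..L,
      ((deriv (fun s => U (x, s)) t) ^ 2
        + (deriv (fun y => U (y, t)) x) ^ 2
        + ε * γ * (U (x, t)) ^ 2
        + ε * (deriv (fun s => deriv (fun y => U (y, s)) x) t) ^ 2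
        + ε * U (x, t) * (deriv (fun y => U (y, t)) x) ^ 2)) :
    ∀ t : ℝ,
      deriv E t
        = ε * ∫ x in (-L)..L,
            deriv (fun s => U (x, s)) t * (deriv (fun y => U (y, t)) x) ^ 2 := by
  intro t₀
  -- Smoothness of partial derivatives
  have h1 : ContDiff ℝ 3 (pd1 U) := contDiff_pd1 hU
  have h2 : ContDiff ℝ 3 (pd2 U) := contDiff_pd2 hU
  have h21 : ContDiff ℝ 2 (pd2 (pd1 U)) := contDiff_pd2 h1
  have h11 : ContDiff ℝ 2 (pd1 (pd1 U)) := contDiff_pd1 h1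
  have h22 : ContDiff ℝ 2 (pd2 (pd2 U)) := contDiff_pd2 h2
  have h221 : ContDiff ℝ 1 (pd2 (pd2 (pd1 U))) := contDiff_pd2 (contDiff_pd2 h1)
  have h211 : ContDiff ℝ 1 (pd2 (pd1 (pd1 U))) := contDiff_pd2 h11
  have h2211 : Continuous (pd2 (pd2 (pd1 (pd1 U)))) :=
    (contDiff_pd2 h211 (n := 0)).continuous
  -- Differentiability
  have dU : Differentiable ℝ U := hU.differentiable (by norm_num)
  have d1 : Differentiable ℝ (pd1 U) := h1.differentiable (by norm_num)
  have d2 : Differentiable ℝ (pd2 U) := h2.differentiable (by norm_num)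
  have d21 : Differentiable ℝ (pd2 (pd1 U)) := h21.differentiable (by norm_num)
  have d11 : Differentiable ℝ (pd1 (pd1 U)) := h11.differentiable (by norm_num)
  have d22 : Differentiable ℝ (pd2 (pd2 U)) := h22.differentiable (by norm_num)
  have d221 : Differentiable ℝ (pd2 (pd2 (pd1 U))) := h221.differentiable (by norm_num)
  have d211 : Differentiable ℝ (pd2 (pd1 (pd1 U))) := h211.differentiable (by norm_num)
  -- Clairaut
  have c1 : pd1 (pd2 U) = pd2 (pd1 U) := pd_comm (hU.of_le (by norm_num))
  have c2 : pd1 (pd2 (pd1 U)) = pd2 (pd1 (pd1 U)) := pd_comm (h1.of_le (by norm_num))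
  have c3 : pd1 (pd2 (pd2 (pd1 U))) = pd2 (pd1 (pd2 (pd1 U))) := pd_comm h21
  have cc : pd1 (pd2 (pd2 (pd1 U))) = pd2 (pd2 (pd1 (pd1 U))) := by rw [c3, c2]
  -- slice derivative identities
  have sd2U : ∀ x t : ℝ, deriv (fun s => U (x, s)) t = pd2 U (x, t) := fun x t =>
    (hasDerivAt_slice2 (dU (x, t))).deriv
  have sd1U : ∀ x t : ℝ, deriv (fun y => U (y, t)) x = pd1 U (x, t) := fun x t =>
    (hasDerivAt_slice1 (dU (x, t))).deriv
  have sd21 : ∀ x t : ℝ,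
      deriv (fun s => deriv (fun y => U (y, s)) x) t = pd2 (pd1 U) (x, t) := by
    intro x t
    have e : (fun s => deriv (fun y => U (y, s)) x) = fun s => pd1 U (x, s) :=
      funext fun s => sd1U x s
    rw [e]
    exact (hasDerivAt_slice2 (d1 (x, t))).deriv
  -- PDE in pd form
  have hPDE' : ∀ p : ℝ × ℝ, pd2 (pd2 U) p
      = pd1 (pd1 U) p + ε * ((pd1 U p) * (pd1 U p) + U p * pd1 (pd1 U) p
          + pd2 (pd2 (pd1 (pd1 U))) p - γ * U p) := by
    rintro ⟨x, t⟩
    have h := hPDE x t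
    have eA : iteratedDeriv 2 (fun s => U (x, s)) t = pd2 (pd2 U) (x, t) := by
      rw [iteratedDeriv_succ, iteratedDeriv_one]
      have e : deriv (fun s => U (x, s)) = fun s => pd2 U (x, s) :=
        funext fun s => sd2U x s
      rw [e]
      exact (hasDerivAt_slice2 (d2 (x, t))).deriv
    have eB : ∀ y s : ℝ, iteratedDeriv 2 (fun y => U (y, s)) y = pd1 (pd1 U) (y, s) := by
      intro y s
      rw [iteratedDeriv_succ, iteratedDeriv_one]
      have e : deriv (fun y => U (y, s)) = fun y => pd1 U (y, s) :=
        funext fun y => sd1U y s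
      rw [e]
      exact (hasDerivAt_slice1 (d1 (y, s))).deriv
    have eC : iteratedDeriv 2 (fun y => (U (y, t)) ^ 2) x
        = 2 * (pd1 U (x, t) * pd1 U (x, t)) + 2 * (U (x, t) * pd1 (pd1 U) (x, t)) := by
      rw [iteratedDeriv_succ, iteratedDeriv_one]
      have e : deriv (fun y => (U (y, t)) ^ 2) = fun y => 2 * U (y, t) * pd1 U (y, t) := by
        funext y
        have := ((hasDerivAt_slice1 (dU (y, t))).mul (hasDerivAt_slice1 (dU (y, t)))).deriv
        have e2 : (fun y => (U (y, t)) ^ 2) = fun y => U (y, t) * U (y, t) := by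
          funext z; ring
        rw [e2, show (fun y => U (y, t) * U (y, t)) = ((fun y => U (y, t)) * fun y => U (y, t)) from rfl, this]; ring
      rw [e]
      have H := ((hasDerivAt_slice1 (dU (x, t))).const_mul 2).mul
        (hasDerivAt_slice1 (d1 (x, t)))
      rw [show (fun y => 2 * U (y, t) * pd1 U (y, t)) = ((fun y => 2 * U (y, t)) * fun y => pd1 U (y, t)) from rfl, H.deriv]; ring
    have eD : iteratedDeriv 2 (fun s => iteratedDeriv 2 (fun y => U (y, s)) x) t
        = pd2 (pd2 (pd1 (pd1 U))) (x, t) := by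
      have e : (fun s => iteratedDeriv 2 (fun y => U (y, s)) x)
          = fun s => pd1 (pd1 U) (x, s) := funext fun s => eB x s
      rw [e, iteratedDeriv_succ, iteratedDeriv_one]
      have e2 : deriv (fun s => pd1 (pd1 U) (x, s)) = fun s => pd2 (pd1 (pd1 U)) (x, s) :=
        funext fun s => (hasDerivAt_slice2 (d11 (x, s))).deriv
      rw [e2]
      exact (hasDerivAt_slice2 (d211 (x, t))).deriv
    rw [eA, eB x t, eC, eD] at h
    linear_combination h
  -- time derivative of the integrand
  have hFt : ∀ x t : ℝ, HasDerivAt (fun s => auxF ε γ U (x, s)) (auxFt ε γ U (x, t)) t := by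
    intro x t
    have sU := hasDerivAt_slice2 (dU (x, t))
    have s1 := hasDerivAt_slice2 (d1 (x, t))
    have s2 := hasDerivAt_slice2 (d2 (x, t))
    have s21 := hasDerivAt_slice2 (d21 (x, t))
    have H := ((((s2.mul s2).add (s1.mul s1)).add ((sU.mul sU).const_mul (ε * γ))).add
        ((s21.mul s21).const_mul ε)).add ((sU.const_mul ε).mul (s1.mul s1))
    unfold auxF auxFt
    refine H.congr_deriv ?_
    simp only [Pi.mul_apply, Pi.add_apply]
    ring
  -- x derivative of G
  have hdG : ∀ x t : ℝ, HasDerivAt (fun y => auxG ε U (y, t)) (auxdG ε U (x, t)) x := by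
    intro x t
    have sU := hasDerivAt_slice1 (dU (x, t))
    have s1 := hasDerivAt_slice1 (d1 (x, t))
    have s2 : HasDerivAt (fun y => pd2 U (y, t)) (pd2 (pd1 U) (x, t)) x := by
      have := hasDerivAt_slice1 (d2 (x, t)); rwa [c1] at this
    have s221 : HasDerivAt (fun y => pd2 (pd2 (pd1 U)) (y, t))
        (pd2 (pd2 (pd1 (pd1 U))) (x, t)) x := by
      have := hasDerivAt_slice1 (d221 (x, t)); rwa [cc] at this
    have H := (((s2.const_mul 2).mul s1).add
        ((((sU.const_mul 2).mul s2).mul s1).const_mul ε)).add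
        (((s2.const_mul 2).mul s221).const_mul ε)
    unfold auxG auxdG
    refine H.congr_deriv ?_
    simp only [Pi.mul_apply, Pi.add_apply]
    ring
  -- key pointwise identity
  have hkey : ∀ p : ℝ × ℝ,
      auxFt ε γ U p = ε * (pd2 U p * (pd1 U p * pd1 U p)) + auxdG ε U p := by
    intro p
    unfold auxFt auxdG
    linear_combination (2 * pd2 U p) * hPDE' p
  -- rewrite E in terms of auxF
  have hE' : E = fun t => ∫ x in (-L)..L, auxF ε γ U (x, t) := by
    rw [hE]; funext t
    apply intervalIntegral.integral_congr
    intro x _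
    simp only [auxF]
    rw [sd2U, sd1U, sd21]
    ring
  -- continuity facts
  have cU := hU.continuous
  have c1c := h1.continuous
  have c2c := h2.continuous
  have c21c := h21.continuous
  have c11c := h11.continuous
  have c221c := h221.continuous
  have c22c := h22.continuous
  have cF : Continuous (auxF ε γ U) := by unfold auxF; fun_prop
  have cFt : Continuous (auxFt ε γ U) := by unfold auxFt; fun_prop
  have cdG : Continuous (auxdG ε U) := by unfold auxdG; fun_prop
  have cmk : ∀ t : ℝ, Continuous fun x : ℝ => (x, t) := fun t =>
    continuous_id.prodMk continuous_const
  have cFs : ∀ t : ℝ, Continuous fun x => auxF ε γ U (x, t) := fun t => cF.comp (cmk t)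
  have cFts : ∀ t : ℝ, Continuous fun x => auxFt ε γ U (x, t) := fun t => cFt.comp (cmk t)
  have cdGs : ∀ t : ℝ, Continuous fun x => auxdG ε U (x, t) := fun t => cdG.comp (cmk t)
  -- bound on compact set
  have hK : IsCompact ((Set.Icc (-L) L) ×ˢ (Set.Icc (t₀ - 1) (t₀ + 1))) :=
    isCompact_Icc.prod isCompact_Icc
  obtain ⟨C, hC⟩ := hK.exists_bound_of_continuousOn cFt.continuousOn
  -- differentiation under the integral sign
  have hLeib := intervalIntegral.hasDerivAt_integral_of_dominated_loc_of_deriv_le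
    (F := fun t x => auxF ε γ U (x, t)) (F' := fun t x => auxFt ε γ U (x, t))
    (a := -L) (b := L) (μ := MeasureTheory.volume) (x₀ := t₀) (bound := fun _ => C)
    (Metric.ball_mem_nhds t₀ zero_lt_one)
    (Filter.Eventually.of_forall fun t => (cFs t).aestronglyMeasurable)
    ((cFs t₀).intervalIntegrable _ _)
    (cFts t₀).aestronglyMeasurable
    (MeasureTheory.ae_of_all _ fun x hx t ht => by
      apply hC (x, t)
      constructor
      · have hx' : x ∈ Set.Ioc (-L) L := by
          rwa [Set.uIoc_of_le (by linarith : -L ≤ L)] at hx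
        exact ⟨le_of_lt hx'.1, hx'.2⟩
      · rw [Real.ball_eq_Ioo] at ht
        exact ⟨le_of_lt ht.1, le_of_lt ht.2⟩)
    intervalIntegrable_const
    (MeasureTheory.ae_of_all _ fun x hx t ht => hFt x t)
  have hd : deriv E t₀ = ∫ x in (-L)..L, auxFt ε γ U (x, t₀) := by
    rw [hE']; exact hLeib.2.deriv
  -- FTC for the auxG part
  have hint_dG : IntervalIntegrable (fun x => auxdG ε U (x, t₀))
      MeasureTheory.volume (-L) L := (cdGs t₀).intervalIntegrable _ _
  have hFTC : ∫ x in (-L)..L, auxdG ε U (x, t₀)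
      = auxG ε U (L, t₀) - auxG ε U (-L, t₀) :=
    intervalIntegral.integral_eq_sub_of_hasDerivAt (fun x _ => hdG x t₀) hint_dG
  -- periodicity
  have hshift : ∀ p : ℝ × ℝ, U (p + (2 * L, 0)) = U p := by
    rintro ⟨x, t⟩
    show U (x + 2 * L, t + 0) = U (x, t)
    rw [add_zero]; exact hper x t
  have s1sh : ∀ p, pd1 U (p + (2 * L, 0)) = pd1 U p := pd1_shift dU hshift
  have s2sh : ∀ p, pd2 U (p + (2 * L, 0)) = pd2 U p := pd2_shift dU hshift
  have s21sh : ∀ p, pd2 (pd1 U) (p + (2 * L, 0)) = pd2 (pd1 U) p := pd2_shift d1 s1sh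
  have s221sh : ∀ p, pd2 (pd2 (pd1 U)) (p + (2 * L, 0)) = pd2 (pd2 (pd1 U)) p :=
    pd2_shift d21 s21sh
  have hGL : auxG ε U (L, t₀) = auxG ε U (-L, t₀) := by
    have e : ((L : ℝ), t₀) = ((-L, t₀) : ℝ × ℝ) + (2 * L, 0) := by
      simp [Prod.ext_iff]; ring
    rw [e]
    unfold auxG
    rw [hshift, s1sh, s2sh, s221sh]
  -- split the integral
  have hint1 : IntervalIntegrable
      (fun x => ε * (pd2 U (x, t₀) * (pd1 U (x, t₀) * pd1 U (x, t₀))))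
      MeasureTheory.volume (-L) L := by
    apply Continuous.intervalIntegrable
    fun_prop
  have hsplit : ∫ x in (-L)..L, auxFt ε γ U (x, t₀)
      = (∫ x in (-L)..L, ε * (pd2 U (x, t₀) * (pd1 U (x, t₀) * pd1 U (x, t₀))))
        + ∫ x in (-L)..L, auxdG ε U (x, t₀) := by
    rw [← intervalIntegral.integral_add hint1 hint_dG]
    apply intervalIntegral.integral_congr
    intro x _
    exact hkey (x, t₀)
  rw [hd, hsplit, hFTC, hGL, sub_self, add_zero,
    intervalIntegral.integral_const_mul]
  congr 1
  apply intervalIntegral.integral_congr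
  intro x _
  simp only [sd2U, sd1U]
  ring
end

section
/- Let n be a nonzero integer and let a : ℤ → ℂ be a sequence with a(0) = 0 and |a(−k)| = |a(k)| for all k ∈ ℤ, such that the family k ↦ |k|·|a(k)|² is summable over ℤ. Then the family k ↦ ((n−k)²/(4nk))·|a(k)|² (with the convention that the term at k = 0 is 0) is summable over ℤ and ∑_{k∈ℤ} ((n−k)²/(4nk))·|a(k)|² = −(1/2) ∑_{k∈ℤ} |a(k)|². (This identity reduces the resonance sum in the second-order expansion to a multiple of f^±, giving f_s^± = (1/2) f^± ∑_k |a_k^∓|².) -/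
lemma tsum_zero_of_odd {g : ℤ → ℝ} (h : ∀ k, g (-k) = - g k) : ∑' k, g k = 0 := by
  have h1 : ∑' k, g (-k) = ∑' k, g k := (Equiv.neg ℤ).tsum_eq g
  have h2 : ∑' k, g (-k) = - ∑' k, g k := by
    simp_rw [h]; exact tsum_neg
  linarith [h1, h2]

/-- If a : ℤ → ℂ satisfies a(0) = 0, |a(−k)| = |a(k)|, and
k ↦ |k||a(k)|² is summable, then k ↦ ((n−k)²/(4nk))|a(k)|² is summable and
∑_{k∈ℤ} ((n−k)²/(4nk))|a(k)|² = −(1/2)∑_{k∈ℤ}|a(k)|². -/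
theorem resonance_sum_identity
    (n : ℤ) (hn : n ≠ 0) (a : ℤ → ℂ)
    (ha0 : a 0 = 0)
    (hsym : ∀ k : ℤ, ‖a (-k)‖ = ‖a k‖)
    (hsum : Summable (fun k : ℤ => (|k| : ℝ) * ‖a k‖ ^ 2)) :
    Summable (fun k : ℤ => (((n : ℝ) - k) ^ 2 / (4 * n * k)) * ‖a k‖ ^ 2) ∧
      ∑' k : ℤ, (((n : ℝ) - k) ^ 2 / (4 * n * k)) * ‖a k‖ ^ 2
        = -(1 / 2) * ∑' k : ℤ, ‖a k‖ ^ 2 := by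
  set f : ℤ → ℝ := fun k => ‖a k‖ ^ 2 with hf
  have hf0 : f 0 = 0 := by simp [hf, ha0]
  have hfnn : ∀ k, 0 ≤ f k := fun k => by positivity
  have hfsym : ∀ k, f (-k) = f k := fun k => by simp only [hf]; rw [hsym k]
  have hnR : (n : ℝ) ≠ 0 := Int.cast_ne_zero.mpr hn
  -- f is summable
  have hf2 : Summable f := by
    apply hsum.of_nonneg_of_le hfnn
    intro k
    rcases eq_or_ne k 0 with rfl | hk
    · simp [hf0]
    · have h1 : (1 : ℝ) ≤ |(k : ℝ)| := by
        have := Int.one_le_abs hk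
        calc (1:ℝ) ≤ (|k| : ℤ) := by exact_mod_cast this
        _ = |(k:ℝ)| := by push_cast; ring
      calc f k = 1 * f k := (one_mul _).symm
      _ ≤ |(k:ℝ)| * f k := mul_le_mul_of_nonneg_right h1 (hfnn k)
      _ = (|k| : ℝ) * f k := by push_cast; ring
  -- pieces
  set g1 : ℤ → ℝ := fun k => (n : ℝ) / (4 * k) * f k with hg1def
  set g2 : ℤ → ℝ := fun k => (k : ℝ) / (4 * n) * f k with hg2def
  have hg1 : Summable g1 := by
    apply Summable.of_norm_bounded (g := fun k => |(n:ℝ)| / 4 * f k) (hf2.mul_left _)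
    intro k
    rcases eq_or_ne k 0 with rfl | hk
    · simp [hg1def, hf0]
    · have hkR : (k : ℝ) ≠ 0 := Int.cast_ne_zero.mpr hk
      have h1 : (1 : ℝ) ≤ |(k : ℝ)| := by
        have := Int.one_le_abs hk
        calc (1:ℝ) ≤ (|k| : ℤ) := by exact_mod_cast this
        _ = |(k:ℝ)| := by push_cast; ring
      have : ‖g1 k‖ = |(n:ℝ)| / (4 * |(k:ℝ)|) * f k := by
        simp [hg1def, abs_div, abs_mul, abs_of_nonneg (hfnn k), Real.norm_eq_abs]
      rw [this]
      apply mul_le_mul_of_nonneg_right _ (hfnn k)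
      apply div_le_div_of_nonneg_left (abs_nonneg _) (by norm_num) (by linarith)
  have hg2 : Summable g2 := by
    apply Summable.of_norm_bounded (g := fun k : ℤ => (1 / (4 * |(n:ℝ)|)) * ((|k| : ℝ) * f k))
      (hsum.mul_left _)
    intro k
    have : ‖g2 k‖ = |(k:ℝ)| / (4 * |(n:ℝ)|) * f k := by
      simp [hg2def, abs_div, abs_mul, abs_of_nonneg (hfnn k), Real.norm_eq_abs]
    rw [this]
    have : (|k| : ℝ) = |(k:ℝ)| := by push_cast; ring
    rw [this]; ring_nf; rfl
  -- pointwise identity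
  have hpt : ∀ k : ℤ, (((n : ℝ) - k) ^ 2 / (4 * n * k)) * f k
      = g1 k + g2 k - (1/2) * f k := by
    intro k
    rcases eq_or_ne k 0 with rfl | hk
    · simp [hg1def, hg2def, hf0]
    · have hkR : (k : ℝ) ≠ 0 := Int.cast_ne_zero.mpr hk
      simp only [hg1def, hg2def]
      field_simp
      ring
  have hodd1 : ∑' k, g1 k = 0 := by
    apply tsum_zero_of_odd
    intro k
    simp only [hg1def, hfsym, Int.cast_neg]
    ring
  have hodd2 : ∑' k, g2 k = 0 := by
    apply tsum_zero_of_odd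
    intro k
    simp only [hg2def, hfsym, Int.cast_neg]
    ring
  have hS : Summable (fun k : ℤ => (((n : ℝ) - k) ^ 2 / (4 * n * k)) * f k) := by
    apply Summable.congr ((hg1.add hg2).sub (hf2.mul_left (1/2)))
    intro k; exact (hpt k).symm
  refine ⟨hS, ?_⟩
  calc ∑' k : ℤ, (((n : ℝ) - k) ^ 2 / (4 * n * k)) * f k
      = ∑' k : ℤ, (g1 k + g2 k - (1/2) * f k) := tsum_congr hpt
    _ = (∑' k, g1 k + ∑' k, g2 k) - ∑' k, (1/2) * f k := by
        rw [Summable.tsum_sub (hg1.add hg2) (hf2.mul_left _), Summable.tsum_add hg1 hg2]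
    _ = -(1/2) * ∑' k, f k := by
        rw [hodd1, hodd2, tsum_mul_left]; ring
end

section
/- Let k > 0 and let f(ξ,T) = 3k² sech²( (k/2)(ξ − k²T/2) ), where sech y = 1/cosh y, be the KdV solitary wave. Define w(ξ,T) = −(3/8) k⁴ T ∂_ξ f(ξ,T) + k² f(ξ,T). Then w satisfies the inhomogeneous linearized KdV equation 2 ∂_T w + ∂_ξ³ w + ∂_ξ( f w ) = (k⁴/4) ∂_ξ f − k² ∂_ξ³ f at every point (ξ,T). (This is the explicit particular solution of the first-order correction equation around the soliton.) -/
noncomputable def sS (k T y : ℝ) : ℝ := (Real.cosh (k / 2 * (y - k ^ 2 * T / 2)))⁻¹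
noncomputable def tH (k T y : ℝ) : ℝ :=
  Real.sinh (k / 2 * (y - k ^ 2 * T / 2)) / Real.cosh (k / 2 * (y - k ^ 2 * T / 2))

lemma cosh_ne (x : ℝ) : Real.cosh x ≠ 0 := (Real.cosh_pos x).ne'

lemma pyth (k T y : ℝ) : tH k T y ^ 2 = 1 - sS k T y ^ 2 := by
  unfold tH sS
  set x := k / 2 * (y - k ^ 2 * T / 2)
  have h := Real.cosh_sq_sub_sinh_sq x
  have hc := cosh_ne x
  field_simp
  linarith

lemma hu_xi (k T y : ℝ) :
    HasDerivAt (fun y => k / 2 * (y - k ^ 2 * T / 2)) (k / 2) y := by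
  simpa using ((hasDerivAt_id y).sub_const (k ^ 2 * T / 2)).const_mul (k / 2)

lemma hu_t (k ξ T : ℝ) :
    HasDerivAt (fun t => k / 2 * (ξ - k ^ 2 * t / 2)) (-(k ^ 3 / 4)) T := by
  have h1 : HasDerivAt (fun t : ℝ => k ^ 2 * t / 2) (k ^ 2 / 2) T := by
    simpa using ((hasDerivAt_id T).const_mul (k ^ 2)).div_const 2
  have h2 := (h1.const_sub ξ).const_mul (k / 2)
  convert h2 using 1
  · rfl
  · rfl
  ring

lemma hcosh_xi (k T y : ℝ) :
    HasDerivAt (fun y => Real.cosh (k / 2 * (y - k ^ 2 * T / 2)))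
      (Real.sinh (k / 2 * (y - k ^ 2 * T / 2)) * (k / 2)) y :=
  (Real.hasDerivAt_cosh _).comp y (hu_xi k T y)

lemma hsinh_xi (k T y : ℝ) :
    HasDerivAt (fun y => Real.sinh (k / 2 * (y - k ^ 2 * T / 2)))
      (Real.cosh (k / 2 * (y - k ^ 2 * T / 2)) * (k / 2)) y :=
  (Real.hasDerivAt_sinh _).comp y (hu_xi k T y)

lemma hcosh_t (k ξ T : ℝ) :
    HasDerivAt (fun t => Real.cosh (k / 2 * (ξ - k ^ 2 * t / 2)))
      (Real.sinh (k / 2 * (ξ - k ^ 2 * T / 2)) * -(k ^ 3 / 4)) T :=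
  (Real.hasDerivAt_cosh _).comp T (hu_t k ξ T)

lemma hsinh_t (k ξ T : ℝ) :
    HasDerivAt (fun t => Real.sinh (k / 2 * (ξ - k ^ 2 * t / 2)))
      (Real.cosh (k / 2 * (ξ - k ^ 2 * T / 2)) * -(k ^ 3 / 4)) T :=
  (Real.hasDerivAt_sinh _).comp T (hu_t k ξ T)

lemma hS (k T y : ℝ) :
    HasDerivAt (fun y => sS k T y) (-(k / 2) * tH k T y * sS k T y) y := by
  have h := (hcosh_xi k T y).inv (cosh_ne _)
  simp only [Pi.inv_def] at h
  unfold sS tH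
  convert h using 1
  · rfl
  · rfl
  set x := k / 2 * (y - k ^ 2 * T / 2)
  have hc := cosh_ne x
  field_simp

lemma hT (k T y : ℝ) :
    HasDerivAt (fun y => tH k T y) (k / 2 * (sS k T y) ^ 2) y := by
  have h := (hsinh_xi k T y).div (hcosh_xi k T y) (cosh_ne _)
  simp only [Pi.div_def] at h
  unfold sS tH
  convert h using 1
  · rfl
  · rfl
  set x := k / 2 * (y - k ^ 2 * T / 2)
  have hc := cosh_ne x
  have hp := Real.cosh_sq_sub_sinh_sq x
  field_simp
  linear_combination (-k) * hp

lemma hS_t (k ξ T : ℝ) :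
    HasDerivAt (fun t => sS k t ξ) (k ^ 3 / 4 * tH k T ξ * sS k T ξ) T := by
  have h := (hcosh_t k ξ T).inv (cosh_ne _)
  simp only [Pi.inv_def] at h
  unfold sS tH
  convert h using 1
  · rfl
  · rfl
  set x := k / 2 * (ξ - k ^ 2 * T / 2)
  have hc := cosh_ne x
  field_simp

lemma hT_t (k ξ T : ℝ) :
    HasDerivAt (fun t => tH k t ξ) (-(k ^ 3 / 4) * (sS k T ξ) ^ 2) T := by
  have h := (hsinh_t k ξ T).div (hcosh_t k ξ T) (cosh_ne _)
  simp only [Pi.div_def] at h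
  unfold sS tH
  convert h using 1
  · rfl
  · rfl
  set x := k / 2 * (ξ - k ^ 2 * T / 2)
  have hc := cosh_ne x
  have hp := Real.cosh_sq_sub_sinh_sq x
  field_simp
  linear_combination (k ^ 3) * hp

/- explicit derivative expressions -/
noncomputable def F0 (k T y : ℝ) : ℝ := 3 * k ^ 2 * sS k T y ^ 2
noncomputable def F1 (k T y : ℝ) : ℝ := -3 * k ^ 3 * sS k T y ^ 2 * tH k T y
noncomputable def F2 (k T y : ℝ) : ℝ :=
  -(3 * k ^ 4 / 2) * (sS k T y ^ 4 - 2 * sS k T y ^ 2 * tH k T y ^ 2)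
noncomputable def F3 (k T y : ℝ) : ℝ :=
  -3 * k ^ 5 * (sS k T y ^ 2 * tH k T y ^ 3 - 2 * sS k T y ^ 4 * tH k T y)
noncomputable def F4 (k T y : ℝ) : ℝ :=
  -3 * k ^ 6 * (-(sS k T y ^ 2 * tH k T y ^ 4) + 11 / 2 * sS k T y ^ 4 * tH k T y ^ 2
    - sS k T y ^ 6)

lemma hF0 (k T y : ℝ) : HasDerivAt (fun y => F0 k T y) (F1 k T y) y := by
  have h := ((hS k T y).pow 2).const_mul (3 * k ^ 2)
  simp only [Pi.pow_apply, Pi.mul_apply, Pi.sub_apply, Pi.inv_apply, Pi.div_apply] at h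
  unfold F0 F1; convert h using 1; rfl; rfl; ring

lemma hF1 (k T y : ℝ) : HasDerivAt (fun y => F1 k T y) (F2 k T y) y := by
  have h := ((((hS k T y).pow 2).mul (hT k T y)).const_mul (k ^ 3)).const_mul (-3)
  simp only [Pi.pow_apply, Pi.mul_apply, Pi.sub_apply, Pi.inv_apply, Pi.div_apply] at h
  unfold F1 F2
  convert h using 1
  · rfl
  · rfl
  · funext z; ring
  · ring

lemma hF2 (k T y : ℝ) : HasDerivAt (fun y => F2 k T y) (F3 k T y) y := by
  have h := (((hS k T y).pow 4).sub
    ((((hS k T y).pow 2).mul ((hT k T y).pow 2)).const_mul 2)).const_mul (-(3 * k ^ 4 / 2))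
  simp only [Pi.pow_apply, Pi.mul_apply, Pi.sub_apply, Pi.inv_apply, Pi.div_apply] at h
  unfold F2 F3
  convert h using 1
  · rfl
  · rfl
  · funext z; ring
  · ring

lemma hF3 (k T y : ℝ) : HasDerivAt (fun y => F3 k T y) (F4 k T y) y := by
  have h := ((((hS k T y).pow 2).mul ((hT k T y).pow 3)).sub
    ((((hS k T y).pow 4).mul (hT k T y)).const_mul 2)).const_mul (-3 * k ^ 5)
  simp only [Pi.pow_apply, Pi.mul_apply, Pi.sub_apply, Pi.inv_apply, Pi.div_apply] at h
  unfold F3 F4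
  convert h using 1
  · rfl
  · rfl
  · funext z; ring
  · ring

lemma hF0_t (k ξ T : ℝ) :
    HasDerivAt (fun t => F0 k t ξ) (-(k ^ 2 / 2) * F1 k T ξ) T := by
  have h := ((hS_t k ξ T).pow 2).const_mul (3 * k ^ 2)
  simp only [Pi.pow_apply, Pi.mul_apply, Pi.sub_apply, Pi.inv_apply, Pi.div_apply] at h
  unfold F0 F1; convert h using 1; rfl; rfl; ring

lemma hF1_t (k ξ T : ℝ) :
    HasDerivAt (fun t => F1 k t ξ) (-(k ^ 2 / 2) * F2 k T ξ) T := by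
  have h := ((((hS_t k ξ T).pow 2).mul (hT_t k ξ T)).const_mul (k ^ 3)).const_mul (-3)
  simp only [Pi.pow_apply, Pi.mul_apply, Pi.sub_apply, Pi.inv_apply, Pi.div_apply] at h
  unfold F1 F2
  convert h using 1
  · rfl
  · rfl
  · funext z; ring
  · ring

/- w pieces -/
noncomputable def W0 (k T y : ℝ) : ℝ := -(3 / 8) * k ^ 4 * T * F1 k T y + k ^ 2 * F0 k T y
noncomputable def W1 (k T y : ℝ) : ℝ := -(3 / 8) * k ^ 4 * T * F2 k T y + k ^ 2 * F1 k T y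
noncomputable def W2 (k T y : ℝ) : ℝ := -(3 / 8) * k ^ 4 * T * F3 k T y + k ^ 2 * F2 k T y
noncomputable def W3 (k T y : ℝ) : ℝ := -(3 / 8) * k ^ 4 * T * F4 k T y + k ^ 2 * F3 k T y

lemma hW0 (k T y : ℝ) : HasDerivAt (fun y => W0 k T y) (W1 k T y) y :=
  ((hF1 k T y).const_mul _).add ((hF0 k T y).const_mul _)

lemma hW1 (k T y : ℝ) : HasDerivAt (fun y => W1 k T y) (W2 k T y) y :=
  ((hF2 k T y).const_mul _).add ((hF1 k T y).const_mul _)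

lemma hW2 (k T y : ℝ) : HasDerivAt (fun y => W2 k T y) (W3 k T y) y :=
  ((hF3 k T y).const_mul _).add ((hF2 k T y).const_mul _)

lemma hW0_t (k ξ T : ℝ) :
    HasDerivAt (fun t => W0 k t ξ)
      (-(3 / 8) * k ^ 4 * (F1 k T ξ + T * (-(k ^ 2 / 2) * F2 k T ξ))
        + k ^ 2 * (-(k ^ 2 / 2) * F1 k T ξ)) T := by
  have h1 : HasDerivAt (fun t : ℝ => t * F1 k t ξ)
      (1 * F1 k T ξ + T * (-(k ^ 2 / 2) * F2 k T ξ)) T :=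
    (hasDerivAt_id T).mul (hF1_t k ξ T)
  have h := (h1.const_mul (-(3 / 8) * k ^ 4)).add ((hF0_t k ξ T).const_mul (k ^ 2))
  simp only [Pi.add_def] at h
  unfold W0
  convert h using 1
  · rfl
  · rfl
  · funext z; ring
  · ring

/-- With f the KdV soliton f(ξ,T) = 3k² sech²((k/2)(ξ − k²T/2)),
the function w = −(3/8)k⁴T ∂_ξ f + k² f solves the inhomogeneous linearized KdV
equation 2∂_T w + ∂_ξ³ w + ∂_ξ(fw) = (k⁴/4)∂_ξ f − k²∂_ξ³ f. -/
theorem linearized_KdV_particular_solution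
    (k : ℝ) (hk : 0 < k) (f w : ℝ × ℝ → ℝ)
    (hf : f = fun p : ℝ × ℝ =>
      3 * k ^ 2 * (1 / Real.cosh ((k / 2) * (p.1 - k ^ 2 * p.2 / 2))) ^ 2)
    (hw : w = fun p : ℝ × ℝ =>
      -(3 / 8) * k ^ 4 * p.2 * deriv (fun y => f (y, p.2)) p.1 + k ^ 2 * f p) :
    ∀ ξ T : ℝ,
      2 * deriv (fun s => w (ξ, s)) T
        + iteratedDeriv 3 (fun y => w (y, T)) ξ
        + deriv (fun y => f (y, T) * w (y, T)) ξ
      = (k ^ 4 / 4) * deriv (fun y => f (y, T)) ξ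
        - k ^ 2 * iteratedDeriv 3 (fun y => f (y, T)) ξ := by
  have hfF : f = fun p : ℝ × ℝ => F0 k p.2 p.1 := by
    rw [hf]; funext p; simp [F0, sS, one_div]
  have hderivf : ∀ T₀ ξ₀ : ℝ, deriv (fun y => f (y, T₀)) ξ₀ = F1 k T₀ ξ₀ := by
    intro T₀ ξ₀
    rw [hfF]
    exact (hF0 k T₀ ξ₀).deriv
  have hwW : w = fun p : ℝ × ℝ => W0 k p.2 p.1 := by
    rw [hw]; funext p
    rw [hderivf p.2 p.1, hfF, W0]
  intro ξ T
  -- time derivative of w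
  have e1 : deriv (fun s => w (ξ, s)) T
      = -(3 / 8) * k ^ 4 * (F1 k T ξ + T * (-(k ^ 2 / 2) * F2 k T ξ))
        + k ^ 2 * (-(k ^ 2 / 2) * F1 k T ξ) := by
    rw [hwW]; exact (hW0_t k ξ T).deriv
  -- third spatial derivative of w
  have ew1 : (deriv fun y => w (y, T)) = fun y => W1 k T y := by
    funext y; rw [hwW]; exact (hW0 k T y).deriv
  have ew2 : (deriv fun y => W1 k T y) = fun y => W2 k T y :=
    funext fun y => (hW1 k T y).deriv
  have e2 : iteratedDeriv 3 (fun y => w (y, T)) ξ = W3 k T ξ := by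
    rw [show (3 : ℕ) = 2 + 1 from rfl, iteratedDeriv_succ,
      show (2 : ℕ) = 1 + 1 from rfl, iteratedDeriv_succ, iteratedDeriv_one,
      ew1, ew2]
    exact (hW2 k T ξ).deriv
  -- product derivative
  have e3 : deriv (fun y => f (y, T) * w (y, T)) ξ
      = F1 k T ξ * W0 k T ξ + F0 k T ξ * W1 k T ξ := by
    have h : (fun y => f (y, T) * w (y, T)) = fun y => F0 k T y * W0 k T y := by
      funext y; rw [hfF, hwW]
    rw [h]
    exact ((hF0 k T ξ).mul (hW0 k T ξ)).deriv
  -- third spatial derivative of f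
  have ef1 : (deriv fun y => f (y, T)) = fun y => F1 k T y := by
    funext y; rw [hfF]; exact (hF0 k T y).deriv
  have ef2 : (deriv fun y => F1 k T y) = fun y => F2 k T y :=
    funext fun y => (hF1 k T y).deriv
  have e4 : iteratedDeriv 3 (fun y => f (y, T)) ξ = F3 k T ξ := by
    rw [show (3 : ℕ) = 2 + 1 from rfl, iteratedDeriv_succ,
      show (2 : ℕ) = 1 + 1 from rfl, iteratedDeriv_succ, iteratedDeriv_one,
      ef1, ef2]
    exact (hF2 k T ξ).deriv
  rw [e1, e2, e3, e4, hderivf T ξ]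
  have hp := pyth k T ξ
  unfold W0 W1 W3 F0 F1 F2 F3 F4
  set s := sS k T ξ
  set t := tH k T ξ
  linear_combination
    (-(9 / 8) * k ^ 10 * T * s ^ 2 * t ^ 2 + 9 / 16 * k ^ 10 * T * s ^ 4
      - 6 * k ^ 7 * s ^ 2 * t) * hp
end
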